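/- Let γ > 0, c ≤ 0 and d be real constants, and let f : ℝ → ℝ be a twice continuously differentiable 2π-periodic function satisfying γ·f''(x)/(1+f'(x)²)^{3/2} + c·f(x) = d for every x ∈ ℝ. Then f is constant. -/

import Mathlib

open Set

private lemma second_deriv_nonpos_of_max {f : ℝ → ℝ} (hreg : ContDiff ℝ 2 f)
    {a : ℝ} (hmax : ∀ x, f x ≤ f a) : deriv (deriv f) a ≤ 0 := by
  have hdf : ContDiff ℝ 1 (deriv f) := by
    have h2 : ContDiff ℝ ((1 : ℕ) + 1) f := by norm_num; exact hreg
    exact ((contDiff_succ_iff_deriv).1 h2).2.2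
  have hf1 : Differentiable ℝ f := hreg.differentiable (by norm_num)
  have hcont2 : Continuous (deriv (deriv f)) := (contDiff_one_iff_deriv.1 hdf).2
  have hlm : IsLocalMax f a := Filter.Eventually.of_forall hmax
  have hda : deriv f a = 0 := hlm.deriv_eq_zero
  by_contra hpos
  push_neg at hpos
  have hmem : {x | 0 < deriv (deriv f) x} ∈ nhds a :=
    (isOpen_lt continuous_const hcont2).mem_nhds hpos
  obtain ⟨ε, hε, hball⟩ := Metric.mem_nhds_iff.1 hmem
  have hab : a < a + ε / 2 := by linarith
  set b := a + ε / 2 with hb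
  have hsub : ∀ x ∈ Ioo a b, 0 < deriv (deriv f) x := by
    intro x hx
    obtain ⟨hx1, hx2⟩ := hx
    rw [hb] at hx2
    apply hball
    simp only [Metric.mem_ball, Real.dist_eq, abs_lt]
    constructor <;> linarith
  have hmono : StrictMonoOn (deriv f) (Icc a b) := by
    apply strictMonoOn_of_deriv_pos (convex_Icc a b) (hdf.continuous.continuousOn)
    intro x hx
    rw [interior_Icc] at hx
    exact hsub x hx
  have hdpos : ∀ x ∈ Ioo a b, 0 < deriv f x := by
    intro x hx
    have := hmono ⟨le_refl a, hab.le⟩ ⟨hx.1.le, hx.2.le⟩ hx.1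
    rwa [hda] at this
  have hmono2 : StrictMonoOn f (Icc a b) := by
    apply strictMonoOn_of_deriv_pos (convex_Icc a b) (hf1.continuous.continuousOn)
    intro x hx
    rw [interior_Icc] at hx
    exact hdpos x hx
  have : f a < f b := hmono2 ⟨le_refl a, hab.le⟩ ⟨hab.le, le_refl b⟩ hab
  exact absurd (hmax b) (not_le.2 this)

private lemma second_deriv_nonneg_of_min {f : ℝ → ℝ} (hreg : ContDiff ℝ 2 f)
    {a : ℝ} (hmin : ∀ x, f a ≤ f x) : 0 ≤ deriv (deriv f) a := by
  have hneg : ContDiff ℝ 2 (fun x => -f x) := hreg.neg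
  have hmax : ∀ x, (fun x => -f x) x ≤ (fun x => -f x) a := fun x => by
    simpa using hmin x
  have := second_deriv_nonpos_of_max hneg hmax
  have e1 : deriv (fun x => -f x) = fun x => -deriv f x := by
    funext x; exact deriv.neg
  rw [e1] at this
  have e2 : deriv (fun x => -deriv f x) a = -deriv (deriv f) a := deriv.neg
  rw [e2] at this
  linarith

/-- Rigidity for the fluid–fluid interface when the denser fluid lies below:
a `2π`-periodic `C²` solution of `γ·κ(f) + c·f = d` with `γ > 0` and `c ≤ 0`
is constant. -/
theorem stmt_16 (γ c d : ℝ) (hγ : 0 < γ) (hc : c ≤ 0)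
    (f : ℝ → ℝ) (hreg : ContDiff ℝ 2 f)
    (hper : ∀ x : ℝ, f (x + 2 * Real.pi) = f x)
    (heq : ∀ x : ℝ,
      γ * deriv (deriv f) x / (1 + deriv f x ^ 2) ^ ((3 : ℝ) / 2) + c * f x = d) :
    ∃ C : ℝ, ∀ x : ℝ, f x = C := by
  have hT : (0 : ℝ) < 2 * Real.pi := by positivity
  have per : Function.Periodic f (2 * Real.pi) := hper
  have hcont : Continuous f := hreg.continuous
  have hne : (Icc (0:ℝ) (2 * Real.pi)).Nonempty := ⟨0, le_refl 0, hT.le⟩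
  obtain ⟨x₀, _, hx₀⟩ := isCompact_Icc.exists_isMaxOn hne hcont.continuousOn
  obtain ⟨x₁, _, hx₁⟩ := isCompact_Icc.exists_isMinOn hne hcont.continuousOn
  have hmax : ∀ x, f x ≤ f x₀ := by
    intro x
    obtain ⟨y, hy, hxy⟩ := per.exists_mem_Ico₀ hT x
    rw [hxy]
    exact hx₀ ⟨hy.1, hy.2.le⟩
  have hmin : ∀ x, f x₁ ≤ f x := by
    intro x
    obtain ⟨y, hy, hxy⟩ := per.exists_mem_Ico₀ hT x
    rw [hxy]
    exact hx₁ ⟨hy.1, hy.2.le⟩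
  have hD : ∀ x : ℝ, (0:ℝ) < (1 + deriv f x ^ 2) ^ ((3 : ℝ) / 2) := by
    intro x
    apply Real.rpow_pos_of_pos
    positivity
  have h2max : deriv (deriv f) x₀ ≤ 0 := second_deriv_nonpos_of_max hreg hmax
  have h2min : 0 ≤ deriv (deriv f) x₁ := second_deriv_nonneg_of_min hreg hmin
  -- from the equation at x₀ and x₁
  have hA : d ≤ c * f x₀ := by
    have := heq x₀
    have hq : γ * deriv (deriv f) x₀ / (1 + deriv f x₀ ^ 2) ^ ((3 : ℝ) / 2) ≤ 0 :=
      div_nonpos_of_nonpos_of_nonneg (mul_nonpos_of_nonneg_of_nonpos hγ.le h2max) (hD x₀).le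
    linarith
  have hB : c * f x₁ ≤ d := by
    have := heq x₁
    have hq : 0 ≤ γ * deriv (deriv f) x₁ / (1 + deriv f x₁ ^ 2) ^ ((3 : ℝ) / 2) :=
      div_nonneg (mul_nonneg hγ.le h2min) (hD x₁).le
    linarith
  rcases lt_or_eq_of_le hc with hclt | hceq
  · -- c < 0
    have hfe : f x₀ = f x₁ := by nlinarith [hmin x₀]
    refine ⟨f x₀, fun x => le_antisymm (hmax x) ?_⟩
    rw [hfe]; exact hmin x
  · -- c = 0
    subst hceq
    simp only [zero_mul, add_zero] at heq hA hB
    have hd0 : d = 0 := le_antisymm hA hB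
    have hfpp : ∀ x, deriv (deriv f) x = 0 := by
      intro x
      have := heq x
      rw [hd0] at this
      have := (div_eq_zero_iff.1 this)
      rcases this with h | h
      · rcases mul_eq_zero.1 h with h' | h'
        · exact absurd h' hγ.ne'
        · exact h'
      · exact absurd h (hD x).ne'
    have hdf : ContDiff ℝ 1 (deriv f) := by
      have h2 : ContDiff ℝ ((1 : ℕ) + 1) f := by norm_num; exact hreg
      exact ((contDiff_succ_iff_deriv).1 h2).2.2
    have hdfc : ∀ x y : ℝ, deriv f x = deriv f y :=
      is_const_of_deriv_eq_zero (hdf.differentiable (by norm_num)) hfpp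
    -- deriv f is a constant a; periodicity forces a = 0
    set a := deriv f 0 with ha
    have hf1 : Differentiable ℝ f := hreg.differentiable (by norm_num)
    have hlin : ∀ x : ℝ, f x = a * x + f 0 := by
      intro x
      have hg : Differentiable ℝ (fun x => f x - a * x) :=
        hf1.sub ((differentiable_id.const_mul a))
      have hg' : ∀ y, deriv (fun x => f x - a * x) y = 0 := by
        intro y
        have h1 : HasDerivAt (fun x => f x - a * x) (deriv f y - a * 1) y :=
          ((hf1 y).hasDerivAt).sub ((hasDerivAt_id y).const_mul a)
        rw [h1.deriv, ha, hdfc y 0]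
        ring
      have := is_const_of_deriv_eq_zero hg hg' x 0
      simp at this
      linarith
    have ha0 : a = 0 := by
      have h1 := hlin (2 * Real.pi)
      have h2 := hper 0
      rw [zero_add] at h2
      rw [h2, hlin 0] at h1
      have : a * (2 * Real.pi) = 0 := by linarith
      rcases mul_eq_zero.1 this with h | h
      · exact h
      · exact absurd h hT.ne'
    refine ⟨f 0, fun x => by rw [hlin x, ha0]; ring⟩
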